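/- Let I be a monomial ideal in R = K[x_1,...,x_n] with K infinite and A = R/I Artinian, and fix integers d and e > 0. Then the multiplication map ×ℓ^e : A_{d-e} → A_d has maximal rank for a general linear form ℓ if and only if the multiplication map ×(x_1 + ... + x_n)^e : A_{d-e} → A_d has maximal rank. -/

import Mathlib

open MvPolynomial

noncomputable def comp (K : Type*) [Field K] {n : ℕ} (I : Ideal (MvPolynomial (Fin n) K)) (j : ℤ) :
    Submodule K (MvPolynomial (Fin n) K ⧸ I) :=
  if 0 ≤ j then
    (MvPolynomial.homogeneousSubmodule (Fin n) K j.toNat).map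
      (Ideal.Quotient.mkₐ K I).toLinearMap
  else ⊥

noncomputable def hilb (K : Type*) [Field K] {n : ℕ} (I : Ideal (MvPolynomial (Fin n) K)) (j : ℤ) : ℕ :=
  Module.finrank K (comp K I j)

def WLP (K : Type*) [Field K] {n : ℕ} (I : Ideal (MvPolynomial (Fin n) K)) : Prop :=
  ∃ ℓ : MvPolynomial (Fin n) K, ℓ.IsHomogeneous 1 ∧ ∀ j : ℤ,
    (∀ x ∈ comp K I j, Ideal.Quotient.mk I ℓ * x = 0 → x = 0) ∨
    (comp K I (j + 1) ≤ (comp K I j).map (LinearMap.mulLeft K (Ideal.Quotient.mk I ℓ)))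

/-- `I` is a monomial ideal: with every polynomial it contains all monomials of its support. -/
def IsMonomialIdeal {K : Type*} [Field K] {n : ℕ} (I : Ideal (MvPolynomial (Fin n) K)) : Prop :=
  ∀ p ∈ I, ∀ m ∈ p.support, MvPolynomial.monomial m (1 : K) ∈ I

/-- `×ℓᵉ : A_{d-e} → A_d` has maximal rank (injective or surjective). -/
def maxRankPow (K : Type*) [Field K] {n : ℕ} (I : Ideal (MvPolynomial (Fin n) K))
    (ℓ : MvPolynomial (Fin n) K) (d : ℤ) (e : ℕ) : Prop :=
  (∀ x ∈ comp K I (d - e), (Ideal.Quotient.mk I ℓ) ^ e * x = 0 → x = 0) ∨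
  (comp K I d ≤ (comp K I (d - e)).map (LinearMap.mulLeft K ((Ideal.Quotient.mk I ℓ) ^ e)))

section Aux

variable {K : Type*} [Field K] {n : ℕ}

/-- The rescaling algebra map `X i ↦ a i • X i`. -/
noncomputable def resc (a : Fin n → K) : MvPolynomial (Fin n) K →ₐ[K] MvPolynomial (Fin n) K :=
  aeval (fun i => a i • X i)

lemma resc_monomial (a : Fin n → K) (m' : Fin n →₀ ℕ) (c : K) :
    resc a (monomial m' c) = monomial m' (c * m'.prod fun i k => a i ^ k) := by
  rw [resc, aeval_monomial]
  have h1 : (m'.prod fun i k => (a i • X i : MvPolynomial (Fin n) K) ^ k)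
      = C (m'.prod fun i k => a i ^ k) * (m'.prod fun i k => (X i : MvPolynomial (Fin n) K) ^ k) := by
    rw [Finsupp.prod, Finsupp.prod, Finsupp.prod, map_prod, ← Finset.prod_mul_distrib]
    exact Finset.prod_congr rfl fun i _ => by rw [smul_pow, smul_eq_C_mul]
  rw [h1, monomial_eq (s := m') (a := c * m'.prod fun i k => a i ^ k), algebraMap_eq, C_mul]
  ring

lemma resc_coeff (a : Fin n → K) (p : MvPolynomial (Fin n) K) (m : Fin n →₀ ℕ) :
    coeff m (resc a p) = (m.prod fun i k => a i ^ k) * coeff m p := by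
  induction p using MvPolynomial.induction_on' with
  | monomial m' c =>
    rw [resc_monomial, coeff_monomial, coeff_monomial]
    by_cases h : m' = m
    · subst h; simp [mul_comm]
    · simp [h]
  | add p q hp hq => simp [map_add, coeff_add, hp, hq, mul_add]

lemma resc_isHomogeneous (a : Fin n → K) {p : MvPolynomial (Fin n) K} {t : ℕ}
    (hp : p.IsHomogeneous t) : (resc a p).IsHomogeneous t := by
  intro m hm
  apply hp
  rw [resc_coeff] at hm
  exact fun h0 => hm (by rw [h0, mul_zero])

lemma resc_resc (a b : Fin n → K) (h : ∀ i, b i * a i = 1) (p : MvPolynomial (Fin n) K) :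
    resc b (resc a p) = p := by
  apply MvPolynomial.ext
  intro m
  rw [resc_coeff, resc_coeff, ← mul_assoc]
  have : ((m.prod fun i k => b i ^ k) * m.prod fun i k => a i ^ k) = 1 := by
    rw [Finsupp.prod, Finsupp.prod, ← Finset.prod_mul_distrib]
    apply Finset.prod_eq_one
    intro i _
    rw [← mul_pow, h i, one_pow]
  rw [this, one_mul]

lemma resc_mem_ideal {I : Ideal (MvPolynomial (Fin n) K)} (hmono : IsMonomialIdeal I)
    (a : Fin n → K) {p : MvPolynomial (Fin n) K} (hp : p ∈ I) : resc a p ∈ I := by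
  rw [(resc a p).as_sum]
  apply Submodule.sum_mem
  intro m hm
  have hmp : m ∈ p.support := by
    rw [mem_support_iff] at hm ⊢
    rw [resc_coeff] at hm
    exact fun h0 => hm (by rw [h0, mul_zero])
  have h1 : monomial m (1 : K) ∈ I := hmono p hp m hmp
  have : monomial m (coeff m (resc a p)) = C (coeff m (resc a p)) * monomial m 1 := by
    rw [C_mul_monomial, mul_one]
  rw [this]
  exact Ideal.mul_mem_left _ _ h1

lemma resc_sum_X (a : Fin n → K) : resc a (∑ i : Fin n, X i) = ∑ i : Fin n, a i • X i := by
  rw [map_sum]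
  exact Finset.sum_congr rfl fun i _ => by rw [resc, aeval_X]

lemma resc_linear (a b : Fin n → K) :
    resc b (∑ i : Fin n, a i • X i) = ∑ i : Fin n, (a i * b i) • X i := by
  rw [map_sum]
  refine Finset.sum_congr rfl fun i _ => ?_
  rw [resc, map_smul, aeval_X, smul_smul]

lemma homog_one_decomp {ℓ : MvPolynomial (Fin n) K} (h : ℓ.IsHomogeneous 1) :
    ℓ = ∑ i : Fin n, (coeff (Finsupp.single i 1) ℓ) • X i := by
  apply MvPolynomial.ext
  intro m
  rw [coeff_sum]
  by_cases hm : ∃ i, Finsupp.single i 1 = m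
  · obtain ⟨i, hi⟩ := hm
    subst hi
    rw [Finset.sum_eq_single i]
    · simp [coeff_smul, coeff_X']
    · intro j _ hj
      rw [coeff_smul, coeff_X', if_neg, smul_zero]
      intro hc
      exact hj (by
        have := DFunLike.congr_fun hc j
        have h2 := DFunLike.congr_fun hc i
        simp [Finsupp.single_apply] at this h2
        by_contra hne
        simp [Ne.symm hne] at this)
    · simp
  · push_neg at hm
    have hz : coeff m ℓ = 0 := by
      by_contra hc
      have hd := h hc
      obtain ⟨i, hi⟩ : ∃ i, m = Finsupp.single i 1 := by
        have hdeg : Finsupp.degree m = 1 := by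
          rw [Finsupp.degree_eq_weight_one]; exact hd
        have hm0 : m ≠ 0 := by
          intro h0
          rw [h0, map_zero] at hdeg; exact one_ne_zero hdeg.symm
        obtain ⟨i, hi⟩ := Finsupp.support_nonempty_iff.2 hm0
        have hrest : m i + ∑ j ∈ m.support.erase i, m j = 1 := by
          rw [Finset.add_sum_erase _ _ hi]; exact hdeg
        have hmi : m i ≠ 0 := Finsupp.mem_support_iff.1 hi
        have hmi1 : m i = 1 := by omega
        have hzero : ∑ j ∈ m.support.erase i, m j = 0 := by omega
        have hsupp : m.support = {i} := by
          apply Finset.eq_singleton_iff_unique_mem.2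
          refine ⟨hi, fun j hj => ?_⟩
          by_contra hne
          have hje : j ∈ m.support.erase i := Finset.mem_erase.2 ⟨hne, hj⟩
          have := (Finset.sum_eq_zero_iff.1 hzero) j hje
          exact Finsupp.mem_support_iff.1 hj this
        refine ⟨i, ?_⟩
        have := (Finsupp.support_eq_singleton.1 hsupp).2
        rw [this, hmi1]
      exact hm i hi.symm
    rw [hz]
    symm
    apply Finset.sum_eq_zero
    intro i _
    rw [coeff_smul, coeff_X', if_neg (fun hc => hm i hc), smul_zero]

lemma exists_eval_ne_zero' [Infinite K] {p : MvPolynomial (Fin n) K} (hp : p ≠ 0) :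
    ∃ a : Fin n → K, eval a p ≠ 0 := by
  by_contra h
  push_neg at h
  exact hp (MvPolynomial.funext (fun x => by simp [h x]))

lemma det_family [Infinite K] {m : Type*} [Fintype m] [DecidableEq m] {ι : Type*} [Fintype ι]
    (c : ι → MvPolynomial (Fin n) K) (M : ι → Matrix m m K) (a₀ : Fin n → K)
    (h : (∑ i, eval a₀ (c i) • M i).det ≠ 0) :
    ∃ a : Fin n → K, (∀ j, a j ≠ 0) ∧ (∑ i, eval a (c i) • M i).det ≠ 0 := by
  set N : Matrix m m (MvPolynomial (Fin n) K) := ∑ i, c i • (M i).map C with hN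
  have key : ∀ a : Fin n → K, N.map (eval a) = ∑ i, eval a (c i) • M i := by
    intro a
    ext j k
    simp [hN, Matrix.map_apply, Matrix.sum_apply, Matrix.smul_apply, smul_eq_mul]
  have keydet : ∀ a : Fin n → K, eval a N.det = (∑ i, eval a (c i) • M i).det := by
    intro a
    rw [← key a, RingHom.map_det (eval a) N, RingHom.mapMatrix_apply]
  have hNdet : N.det ≠ 0 := fun h0 => h (by rw [← keydet, h0, map_zero])
  have hQ : N.det * ∏ j, X j ≠ 0 := by
    apply mul_ne_zero hNdet
    apply Finset.prod_ne_zero_iff.2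
    intro j _
    exact X_ne_zero j
  obtain ⟨a, ha⟩ := exists_eval_ne_zero' hQ
  rw [map_mul, map_prod] at ha
  refine ⟨a, ?_, ?_⟩
  · intro j h0
    apply ha
    rw [mul_eq_zero]
    right
    exact Finset.prod_eq_zero (Finset.mem_univ j) (by rw [eval_X, h0])
  · intro h0
    exact ha (by rw [keydet, h0, mul_comm, mul_zero])

lemma key_LA [Infinite K] {A : Type*} [CommRing A] [Algebra K A] (V W : Submodule K A)
    [FiniteDimensional K V] [FiniteDimensional K W] {ι : Type*} [Fintype ι]
    (g : ι → MvPolynomial (Fin n) K) (v : ι → A)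
    (hv : ∀ i, ∀ x ∈ V, v i * x ∈ W)
    (t : (Fin n → K) → A) (ht : ∀ a, t a = ∑ i, eval a (g i) • v i)
    (a₀ : Fin n → K)
    (h : (∀ x ∈ V, t a₀ * x = 0 → x = 0) ∨ (W ≤ Submodule.map (LinearMap.mulLeft K (t a₀)) V)) :
    ∃ a : Fin n → K, (∀ j, a j ≠ 0) ∧
      ((∀ x ∈ V, t a * x = 0 → x = 0) ∨ (W ≤ Submodule.map (LinearMap.mulLeft K (t a)) V)) := by
  classical
  have hmem : ∀ i, ∀ x : V, v i * (x : A) ∈ W := fun i x => hv i x x.2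
  let S' : ι → (V →ₗ[K] W) := fun i => (LinearMap.mulLeft K (v i)).restrict (fun x hx => hv i x hx)
  let T' : (Fin n → K) → (V →ₗ[K] W) := fun a => ∑ i, eval a (g i) • S' i
  have hT'coe : ∀ a (x : V), ((T' a x : W) : A) = t a * (x : A) := by
    intro a x
    have : ((T' a x : W) : A) = ∑ i, eval a (g i) • (v i * (x : A)) := by
      simp [T', S', LinearMap.sum_apply, LinearMap.smul_apply, LinearMap.restrict_coe_apply,
        LinearMap.mulLeft_apply]
      rfl
    rw [this, ht a, Finset.sum_mul]
    exact Finset.sum_congr rfl fun i _ => (smul_mul_assoc _ _ _).symm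
  let bV := Module.finBasis K V
  let bW := Module.finBasis K W
  rcases h with hinj | hsurj
  · have hinj' : Function.Injective (T' a₀) := by
      intro x y hxy
      have h1 : t a₀ * ((x : A) - (y : A)) = 0 := by
        have := congrArg (fun z : W => (z : A)) hxy
        simp only [hT'coe] at this
        rw [mul_sub, this, sub_self]
      have h2 := hinj ((x : A) - (y : A)) (sub_mem x.2 y.2) h1
      exact Subtype.ext (by rw [← sub_eq_zero]; exact_mod_cast h2)
    obtain ⟨π, hπ⟩ := (T' a₀).exists_leftInverse_of_injective (LinearMap.ker_eq_bot.2 hinj')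
    let M : ι → Matrix _ _ K := fun i => LinearMap.toMatrix bV bV (π ∘ₗ S' i)
    have hcomp : ∀ a, LinearMap.toMatrix bV bV (π ∘ₗ T' a) = ∑ i, eval a (g i) • M i := by
      intro a
      have : π ∘ₗ T' a = ∑ i, eval a (g i) • (π ∘ₗ S' i) := by
        ext x
        simp [T', LinearMap.sum_apply, map_sum]
      rw [this]
      have hsum := map_sum (LinearMap.toMatrix bV bV).toLinearMap
        (fun i => eval a (g i) • (π ∘ₗ S' i)) Finset.univ
      simp only [LinearEquiv.coe_toLinearMap, LinearMap.map_smul] at hsum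
      rw [hsum]
    have hdet0 : (∑ i, eval a₀ (g i) • M i).det ≠ 0 := by
      rw [← hcomp, hπ, LinearMap.toMatrix_id, Matrix.det_one]
      exact one_ne_zero
    obtain ⟨a, ha0, hadet⟩ := det_family g M a₀ hdet0
    refine ⟨a, ha0, Or.inl ?_⟩
    have hbij : Function.Injective (π ∘ₗ T' a) := by
      have hu : IsUnit (LinearMap.toMatrix bV bV (π ∘ₗ T' a)).det := by
        rw [hcomp]; exact isUnit_iff_ne_zero.2 hadet
      exact (LinearEquiv.ofIsUnitDet hu).injective
    intro x hx hx0
    have : T' a ⟨x, hx⟩ = 0 := by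
      apply Subtype.ext
      rw [hT'coe]
      simpa using hx0
    have h2 : (⟨x, hx⟩ : V) = 0 := hbij (by simp [LinearMap.comp_apply, this])
    exact congrArg Subtype.val h2
  · have hsurj' : Function.Surjective (T' a₀) := by
      intro w
      obtain ⟨x, hxV, hx⟩ := hsurj w.2
      rw [LinearMap.mulLeft_apply] at hx
      exact ⟨⟨x, hxV⟩, Subtype.ext (by rw [hT'coe]; exact hx)⟩
    obtain ⟨σ, hσ⟩ := (T' a₀).exists_rightInverse_of_surjective (LinearMap.range_eq_top.2 hsurj')
    let M : ι → Matrix _ _ K := fun i => LinearMap.toMatrix bW bW ((S' i) ∘ₗ σ)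
    have hcomp : ∀ a, LinearMap.toMatrix bW bW (T' a ∘ₗ σ) = ∑ i, eval a (g i) • M i := by
      intro a
      have : T' a ∘ₗ σ = ∑ i, eval a (g i) • ((S' i) ∘ₗ σ) := by
        ext x
        simp [T', LinearMap.sum_apply]
      rw [this]
      have hsum := map_sum (LinearMap.toMatrix bW bW).toLinearMap
        (fun i => eval a (g i) • ((S' i) ∘ₗ σ)) Finset.univ
      simp only [LinearEquiv.coe_toLinearMap, LinearMap.map_smul] at hsum
      rw [hsum]
    have hdet0 : (∑ i, eval a₀ (g i) • M i).det ≠ 0 := by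
      rw [← hcomp, hσ, LinearMap.toMatrix_id, Matrix.det_one]
      exact one_ne_zero
    obtain ⟨a, ha0, hadet⟩ := det_family g M a₀ hdet0
    refine ⟨a, ha0, Or.inr ?_⟩
    have hbij : Function.Surjective (T' a ∘ₗ σ) := by
      have hu : IsUnit (LinearMap.toMatrix bW bW (T' a ∘ₗ σ)).det := by
        rw [hcomp]; exact isUnit_iff_ne_zero.2 hadet
      exact (LinearEquiv.ofIsUnitDet hu).surjective
    intro w hw
    obtain ⟨u, hu⟩ := hbij ⟨w, hw⟩
    refine ⟨(σ u : A), (σ u).2, ?_⟩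
    rw [LinearMap.mulLeft_apply, ← hT'coe a (σ u)]
    rw [LinearMap.comp_apply] at hu
    rw [hu]

end Aux

section Glue

variable {K : Type*} [Field K] {n : ℕ} {I : Ideal (MvPolynomial (Fin n) K)}

lemma mem_comp {j : ℤ} (hj : 0 ≤ j) {x : MvPolynomial (Fin n) K ⧸ I} :
    x ∈ comp K I j ↔ ∃ p : MvPolynomial (Fin n) K,
      p.IsHomogeneous j.toNat ∧ Ideal.Quotient.mk I p = x := by
  rw [comp, if_pos hj, Submodule.mem_map]
  constructor
  · rintro ⟨p, hp, rfl⟩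
    exact ⟨p, (mem_homogeneousSubmodule _ _).1 hp, by simp [Ideal.Quotient.mkₐ_eq_mk]⟩
  · rintro ⟨p, hp, rfl⟩
    exact ⟨p, (mem_homogeneousSubmodule _ _).2 hp, by simp [Ideal.Quotient.mkₐ_eq_mk]⟩

lemma pow_sum_smul (a : Fin n → K) (e : ℕ) :
    (∑ i : Fin n, a i • X i : MvPolynomial (Fin n) K) ^ e
      = ∑ f : Fin e → Fin n, (∏ k, a (f k)) • ∏ k, (X (f k) : MvPolynomial (Fin n) K) := by
  classical
  have h1 : (∑ i : Fin n, a i • X i : MvPolynomial (Fin n) K) ^ e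
      = ∏ _k : Fin e, (∑ i : Fin n, a i • X i : MvPolynomial (Fin n) K) := by
    rw [Finset.prod_const, Finset.card_univ, Fintype.card_fin]
  rw [h1, Finset.prod_univ_sum]
  rw [Fintype.piFinset_univ]
  apply Finset.sum_congr rfl
  intro f _
  have : (∏ k : Fin e, (a (f k) • X (f k) : MvPolynomial (Fin n) K))
      = C (∏ k : Fin e, a (f k)) * ∏ k : Fin e, (X (f k) : MvPolynomial (Fin n) K) := by
    rw [map_prod, ← Finset.prod_mul_distrib]
    exact Finset.prod_congr rfl fun k _ => by rw [smul_eq_C_mul]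
  rw [this, ← smul_eq_C_mul]

lemma mk_pow_sum_smul (a : Fin n → K) (e : ℕ) :
    (Ideal.Quotient.mk I (∑ i : Fin n, a i • X i)) ^ e
      = ∑ f : Fin e → Fin n, (eval a (∏ k, (X (f k) : MvPolynomial (Fin n) K)))
          • Ideal.Quotient.mk I (∏ k, X (f k)) := by
  rw [← map_pow, pow_sum_smul]
  have : Ideal.Quotient.mk I (∑ f : Fin e → Fin n, (∏ k, a (f k)) • ∏ k, (X (f k) : MvPolynomial (Fin n) K))
      = ∑ f : Fin e → Fin n, (∏ k, a (f k)) • Ideal.Quotient.mk I (∏ k, X (f k)) := by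
    rw [← Ideal.Quotient.mkₐ_eq_mk (R₁ := K)]
    rw [map_sum]
    exact Finset.sum_congr rfl fun f _ => by rw [map_smul]
  rw [this]
  exact Finset.sum_congr rfl fun f _ => by rw [map_prod]; simp [eval_X]

lemma prod_X_isHomogeneous (e : ℕ) (f : Fin e → Fin n) :
    (∏ k, (X (f k) : MvPolynomial (Fin n) K)).IsHomogeneous e := by
  have := MvPolynomial.IsHomogeneous.prod (Finset.univ : Finset (Fin e))
    (fun k => (X (f k) : MvPolynomial (Fin n) K)) (fun _ => 1)
    (fun k _ => isHomogeneous_X K (f k))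
  simpa using this

lemma mul_mem_comp {d : ℤ} {e : ℕ} (hde : 0 ≤ d - e) {q : MvPolynomial (Fin n) K}
    (hq : q.IsHomogeneous e) :
    ∀ x ∈ comp K I (d - e), (Ideal.Quotient.mk I q) * x ∈ comp K I d := by
  intro x hx
  obtain ⟨p, hp, rfl⟩ := (mem_comp hde).1 hx
  rw [← map_mul]
  refine (mem_comp (by omega)).2 ⟨q * p, ?_, rfl⟩
  have := hq.mul hp
  have he : e + (d - ↑e).toNat = d.toNat := by omega
  rwa [he] at this

/-- Torus-action transfer: if multiplication by `(∑ aᵢ xᵢ)^e` has maximal rank with all `aᵢ ≠ 0`,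
then so does multiplication by `(∑ xᵢ)^e`. -/
lemma torus_transfer (hmono : IsMonomialIdeal I) {d : ℤ} {e : ℕ} (hde : 0 ≤ d - e)
    (a : Fin n → K) (ha : ∀ i, a i ≠ 0)
    (h : maxRankPow K I (∑ i : Fin n, a i • X i) d e) :
    maxRankPow K I (∑ i : Fin n, X i) d e := by
  set b : Fin n → K := fun i => (a i)⁻¹ with hb
  have hba : ∀ i, b i * a i = 1 := fun i => inv_mul_cancel₀ (ha i)
  have hab : ∀ i, a i * b i = 1 := fun i => mul_inv_cancel₀ (ha i)
  have hrbl : resc b (∑ i : Fin n, a i • X i) = ∑ i : Fin n, X i := by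
    rw [resc_linear]
    refine .trans (Finset.sum_congr rfl fun i _ => by rw [hab i, one_smul]) rfl
  rcases h with hinj | hsurj
  · left
    intro x hx hx0
    obtain ⟨p, hp, rfl⟩ := (mem_comp hde).1 hx
    rw [← map_pow, ← map_mul, Ideal.Quotient.eq_zero_iff_mem] at hx0
    have h1 : resc a ((∑ i : Fin n, X i) ^ e * p) ∈ I := resc_mem_ideal hmono a hx0
    rw [map_mul, map_pow, resc_sum_X] at h1
    have h2 : (Ideal.Quotient.mk I (∑ i : Fin n, a i • X i)) ^ e
        * Ideal.Quotient.mk I (resc a p) = 0 := by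
      rw [← map_pow, ← map_mul, Ideal.Quotient.eq_zero_iff_mem]
      exact h1
    have h3 : Ideal.Quotient.mk I (resc a p) = 0 :=
      hinj _ ((mem_comp hde).2 ⟨resc a p, resc_isHomogeneous a hp, rfl⟩) h2
    rw [Ideal.Quotient.eq_zero_iff_mem] at h3
    have h4 : resc b (resc a p) ∈ I := resc_mem_ideal hmono b h3
    rw [resc_resc a b hba] at h4
    rw [Ideal.Quotient.eq_zero_iff_mem]
    exact h4
  · right
    intro y hy
    have hd0 : (0:ℤ) ≤ d := by omega
    obtain ⟨p, hp, rfl⟩ := (mem_comp hd0).1 hy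
    have hyW : Ideal.Quotient.mk I (resc a p) ∈ comp K I d :=
      (mem_comp hd0).2 ⟨resc a p, resc_isHomogeneous a hp, rfl⟩
    obtain ⟨z, hz, hz2⟩ := hsurj hyW
    obtain ⟨q, hq, rfl⟩ := (mem_comp hde).1 hz
    rw [LinearMap.mulLeft_apply, ← map_pow, ← map_mul] at hz2
    rw [Ideal.Quotient.mk_eq_mk_iff_sub_mem] at hz2
    have h1 : resc b ((∑ i : Fin n, a i • X i) ^ e * q - resc a p) ∈ I :=
      resc_mem_ideal hmono b hz2
    rw [map_sub, map_mul, map_pow, hrbl, resc_resc a b hba] at h1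
    rw [← Ideal.Quotient.mk_eq_mk_iff_sub_mem] at h1
    refine ⟨Ideal.Quotient.mk I (resc b q),
      (mem_comp hde).2 ⟨resc b q, resc_isHomogeneous b hq, rfl⟩, ?_⟩
    rw [LinearMap.mulLeft_apply, ← map_pow, ← map_mul]
    exact h1

end Glue

/-- **Proposition (mono).** For an Artinian monomial algebra `A = R/I` over an infinite field,
`×ℓᵉ : A_{d-e} → A_d` has maximal rank for a general linear form `ℓ` if and only if
`×(x₁+⋯+xₙ)ᵉ : A_{d-e} → A_d` has maximal rank. -/
theorem stmt4 {K : Type*} [Field K] [Infinite K] {n : ℕ}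
    (I : Ideal (MvPolynomial (Fin n) K)) (hmono : IsMonomialIdeal I)
    (hArt : Module.Finite K (MvPolynomial (Fin n) K ⧸ I))
    (d : ℤ) (e : ℕ) (he : 0 < e) :
    (∃ ℓ : MvPolynomial (Fin n) K, ℓ.IsHomogeneous 1 ∧ maxRankPow K I ℓ d e) ↔
      maxRankPow K I (∑ i : Fin n, MvPolynomial.X i) d e := by
  constructor
  · rintro ⟨ℓ, hℓ, hmax⟩
    by_cases hde : (0:ℤ) ≤ d - e
    · set a₀ : Fin n → K := fun i => coeff (Finsupp.single i 1) ℓ with ha₀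
      have hdec : ℓ = ∑ i : Fin n, a₀ i • X i := homog_one_decomp hℓ
      obtain ⟨a, ha0, hdisj⟩ := key_LA (comp K I (d - e)) (comp K I d)
        (fun f : Fin e → Fin n => ∏ k, X (f k))
        (fun f : Fin e → Fin n => Ideal.Quotient.mk I (∏ k, X (f k)))
        (fun f => mul_mem_comp hde (prod_X_isHomogeneous e f))
        (fun a => (Ideal.Quotient.mk I (∑ i : Fin n, a i • X i)) ^ e)
        (fun a => mk_pow_sum_smul a e)
        a₀
        (by beta_reduce; rw [← hdec]; exact hmax)
      exact torus_transfer hmono hde a ha0 hdisj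
    · left
      intro x hx _
      rw [comp, if_neg hde] at hx
      simpa using hx
  · intro h
    refine ⟨∑ i : Fin n, X i, ?_, h⟩
    exact MvPolynomial.IsHomogeneous.sum Finset.univ (fun i => X i) 1
      (fun i _ => isHomogeneous_X K i)
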